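/- arXiv:1607.04467 — 3 statements merged into one kernel-verified Lean document; each statement's English description precedes it below -/
import Mathlib

section
/- For any positive definite real symmetric d×d matrix Q (d ≥ 2), the minimum of the quadratic form x ↦ xᵀQx over nonzero integer vectors satisfies M_d(Q) ≤ (4/3)^((d-1)/2) · (det Q)^(1/d). -/
open Matrix

/-- `Md d Q` is the minimum of the quadratic form `x ↦ xᵀ Q x` over nonzero
integer vectors (expressed as an infimum, which is attained when `Q` is
positive definite). -/
noncomputable def Md (d : ℕ) (Q : Matrix (Fin d) (Fin d) ℝ) : ℝ :=
  sInf {r : ℝ | ∃ a : Fin d → ℤ, a ≠ 0 ∧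
    r = (fun i => (a i : ℝ)) ⬝ᵥ Q *ᵥ (fun i => (a i : ℝ))}

def MdSet (d : ℕ) (Q : Matrix (Fin d) (Fin d) ℝ) : Set ℝ :=
  {r : ℝ | ∃ a : Fin d → ℤ, a ≠ 0 ∧
    r = (fun i => (a i : ℝ)) ⬝ᵥ Q *ᵥ (fun i => (a i : ℝ))}

lemma Md_eq (d : ℕ) (Q : Matrix (Fin d) (Fin d) ℝ) : Md d Q = sInf (MdSet d Q) := rfl

lemma castVec_ne_zero {d : ℕ} {a : Fin d → ℤ} (ha : a ≠ 0) :
    (fun i => (a i : ℝ)) ≠ 0 := by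
  intro h
  apply ha
  funext i
  have h2 : ((a i : ℝ)) = 0 := by simpa using congrFun h i
  exact_mod_cast h2

lemma dotQ_pos {d : ℕ} {Q : Matrix (Fin d) (Fin d) ℝ} (hQ : Q.PosDef)
    {x : Fin d → ℝ} (hx : x ≠ 0) : 0 < x ⬝ᵥ Q *ᵥ x := by
  have := hQ.dotProduct_mulVec_pos hx
  simpa using this

lemma MdSet_nonneg {d : ℕ} {Q : Matrix (Fin d) (Fin d) ℝ} (hQ : Q.PosDef) :
    ∀ r ∈ MdSet d Q, 0 ≤ r := by
  rintro r ⟨a, ha, rfl⟩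
  exact le_of_lt (dotQ_pos hQ (castVec_ne_zero ha))

lemma MdSet_bddBelow {d : ℕ} {Q : Matrix (Fin d) (Fin d) ℝ} (hQ : Q.PosDef) :
    BddBelow (MdSet d Q) := ⟨0, fun r hr => MdSet_nonneg hQ r hr⟩

lemma MdSet_nonempty (d : ℕ) (Q : Matrix (Fin (d+1)) (Fin (d+1)) ℝ) :
    (MdSet (d+1) Q).Nonempty := by
  refine ⟨_, Pi.single 0 1, ?_, rfl⟩
  intro h
  have := congrFun h 0
  simp [Pi.single_apply] at this

lemma Md_le {d : ℕ} {Q : Matrix (Fin d) (Fin d) ℝ} (hQ : Q.PosDef)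
    {a : Fin d → ℤ} (ha : a ≠ 0) :
    Md d Q ≤ (fun i => (a i : ℝ)) ⬝ᵥ Q *ᵥ (fun i => (a i : ℝ)) :=
  csInf_le (MdSet_bddBelow hQ) ⟨a, ha, rfl⟩

lemma Md_exists_lt {d : ℕ} {Q : Matrix (Fin (d+1)) (Fin (d+1)) ℝ} (hQ : Q.PosDef)
    {ε : ℝ} (hε : 0 < ε) :
    ∃ a : Fin (d+1) → ℤ, a ≠ 0 ∧
      (fun i => (a i : ℝ)) ⬝ᵥ Q *ᵥ (fun i => (a i : ℝ)) < Md (d+1) Q + ε := by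
  have h : sInf (MdSet (d+1) Q) < Md (d+1) Q + ε := by
    rw [← Md_eq]; linarith
  obtain ⟨r, hr, hlt⟩ := exists_lt_of_csInf_lt (MdSet_nonempty d Q) h
  obtain ⟨a, ha, rfl⟩ := hr
  exact ⟨a, ha, hlt⟩

lemma cast_mulVec {d : ℕ} (U : Matrix (Fin d) (Fin d) ℤ) (x : Fin d → ℤ) :
    (fun i => ((U *ᵥ x) i : ℝ)) = (U.map ((↑) : ℤ → ℝ)) *ᵥ (fun i => (x i : ℝ)) := by
  funext i
  have := RingHom.map_mulVec (Int.castRingHom ℝ) U x i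
  simpa [Function.comp_def] using this

lemma quadform_conj {d : ℕ} (Q V : Matrix (Fin d) (Fin d) ℝ) (y : Fin d → ℝ) :
    y ⬝ᵥ (Vᵀ * Q * V) *ᵥ y = (V *ᵥ y) ⬝ᵥ Q *ᵥ (V *ᵥ y) := by
  rw [← mulVec_mulVec, ← mulVec_mulVec, dotProduct_mulVec, vecMul_transpose]

lemma MdSet_transfer {d : ℕ} (Q : Matrix (Fin d) (Fin d) ℝ)
    (U : Matrix (Fin d) (Fin d) ℤ) (hU : IsUnit U.det) :
    MdSet d ((U.map ((↑) : ℤ → ℝ))ᵀ * Q * (U.map ((↑) : ℤ → ℝ))) = MdSet d Q := by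
  classical
  have : Invertible U := U.invertibleOfIsUnitDet hU
  have hWU : ∀ a : Fin d → ℤ, (⅟U) *ᵥ (U *ᵥ a) = a := by
    intro a; rw [mulVec_mulVec, invOf_mul_self, one_mulVec]
  have hUW : ∀ a : Fin d → ℤ, U *ᵥ ((⅟U) *ᵥ a) = a := by
    intro a; rw [mulVec_mulVec, mul_invOf_self, one_mulVec]
  ext r
  constructor
  · rintro ⟨a, ha, rfl⟩
    refine ⟨U *ᵥ a, ?_, ?_⟩
    · intro h
      apply ha; rw [← hWU a, h, mulVec_zero]
    · rw [quadform_conj, cast_mulVec]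
  · rintro ⟨b, hb, rfl⟩
    refine ⟨(⅟U) *ᵥ b, ?_, ?_⟩
    · intro h
      apply hb; rw [← hUW b, h, mulVec_zero]
    · rw [quadform_conj, ← cast_mulVec, hUW]

lemma Md_transfer {d : ℕ} (Q : Matrix (Fin d) (Fin d) ℝ)
    (U : Matrix (Fin d) (Fin d) ℤ) (hU : IsUnit U.det) :
    Md d ((U.map ((↑) : ℤ → ℝ))ᵀ * Q * (U.map ((↑) : ℤ → ℝ))) = Md d Q := by
  rw [Md_eq, Md_eq, MdSet_transfer Q U hU]

lemma posDef_conj {d : ℕ} {Q : Matrix (Fin d) (Fin d) ℝ} (hQ : Q.PosDef)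
    {V : Matrix (Fin d) (Fin d) ℝ} (hV : IsUnit V.det) :
    ((Vᵀ * Q * V)).PosDef := by
  classical
  have : Invertible V := V.invertibleOfIsUnitDet hV
  refine Matrix.PosDef.of_dotProduct_mulVec_pos ?_ ?_
  · have hQh : Qᵀ = Q := hQ.1
    show (Vᵀ * Q * V)ᴴ = _
    rw [conjTranspose_eq_transpose_of_trivial, transpose_mul, transpose_mul,
      transpose_transpose, hQh, mul_assoc]
  · intro x hx
    have hVx : V *ᵥ x ≠ 0 := by
      intro h
      apply hx
      have : (⅟V) *ᵥ (V *ᵥ x) = x := by rw [mulVec_mulVec, invOf_mul_self, one_mulVec]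
      rw [← this, h, mulVec_zero]
    have := dotQ_pos hQ hVx
    simpa [quadform_conj] using this

lemma det_conj_cast {d : ℕ} (Q : Matrix (Fin d) (Fin d) ℝ)
    (U : Matrix (Fin d) (Fin d) ℤ) (hU : IsUnit U.det) :
    ((U.map ((↑) : ℤ → ℝ))ᵀ * Q * (U.map ((↑) : ℤ → ℝ))).det = Q.det := by
  have h1 : (U.map ((↑) : ℤ → ℝ)).det = ((U.det : ℤ) : ℝ) :=
    (RingHom.map_det (Int.castRingHom ℝ) U).symm
  have h2 : (U.det : ℤ) = 1 ∨ (U.det : ℤ) = -1 := Int.isUnit_iff.mp hU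
  rw [det_mul, det_mul, det_transpose, h1]
  rcases h2 with h | h <;> rw [h] <;> push_cast <;> ring

lemma exists_unimodular_col {d : ℕ} (v : Fin (d+1) → ℤ) (hv : v ≠ 0) :
    ∃ (U : Matrix (Fin (d+1)) (Fin (d+1)) ℤ) (c : ℤ), IsUnit U.det ∧ c ≠ 0 ∧
      ∀ i, v i = c * U i 0 := by
  classical
  set N : Submodule ℤ (Fin (d+1) → ℤ) := Submodule.span ℤ {v}
  obtain ⟨n, bM, bN, f, a, hsnf⟩ := N.smithNormalForm (Pi.basisFun ℤ (Fin (d+1)))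
  have hvN : v ∈ N := Submodule.mem_span_singleton_self v
  have hli : LinearIndependent ℤ (fun _ : Fin 1 => v) :=
    linearIndependent_unique_iff.mpr hv
  have b1 : Module.Basis (Fin 1) ℤ N := by
    have : N = Submodule.span ℤ (Set.range (fun _ : Fin 1 => v)) := by
      simp [N, Set.range_const]
    exact (Module.Basis.span hli).map (LinearEquiv.ofEq _ _ this.symm)
  have hn : n = 1 := by
    have e := bN.indexEquiv b1
    simpa using Fintype.card_congr e
  subst hn
  have key2 : v = (bN.repr ⟨v, hvN⟩ 0) • ((bN 0 : Fin (d+1) → ℤ)) := by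
    have key : (⟨v, hvN⟩ : N) = (bN.repr ⟨v, hvN⟩ 0) • bN 0 := by
      conv_lhs => rw [← bN.sum_repr ⟨v, hvN⟩]
      simp [Fin.sum_univ_one]
    have := congrArg (Subtype.val) key
    simpa using this
  have key3 : v = ((bN.repr ⟨v, hvN⟩ 0) * a 0) • bM (f 0) := by
    calc v = (bN.repr ⟨v, hvN⟩ 0) • ((bN 0 : Fin (d+1) → ℤ)) := key2
    _ = (bN.repr ⟨v, hvN⟩ 0) • (a 0 • bM (f 0)) := by rw [hsnf 0]
    _ = ((bN.repr ⟨v, hvN⟩ 0) * a 0) • bM (f 0) := smul_smul _ _ _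
  set c : ℤ := (bN.repr ⟨v, hvN⟩ 0) * a 0 with hc
  have hcne : c ≠ 0 := by
    intro h
    rw [h, zero_smul] at key3
    exact hv key3
  set σ : Fin (d+1) ≃ Fin (d+1) := Equiv.swap 0 (f 0)
  set b' : Module.Basis (Fin (d+1)) ℤ (Fin (d+1) → ℤ) := bM.reindex σ
  have hb'0 : b' 0 = bM (f 0) := by
    simp [b', σ, Module.Basis.reindex_apply, Equiv.symm_swap, Equiv.swap_apply_left]
  set U : Matrix (Fin (d+1)) (Fin (d+1)) ℤ := (Pi.basisFun ℤ (Fin (d+1))).toMatrix b'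
  have hU : IsUnit U.det := by
    have : Invertible U := (Pi.basisFun ℤ (Fin (d+1))).invertibleToMatrix b'
    exact Matrix.isUnit_det_of_invertible U
  refine ⟨U, c, hU, hcne, fun i => ?_⟩
  have hUcol : U i 0 = b' 0 i := by
    simp [U, Module.Basis.toMatrix_apply, Pi.basisFun_repr]
  rw [hUcol, hb'0]
  have := congrFun key3 i
  simpa [Pi.smul_apply, smul_eq_mul] using this

variable {n : ℕ}

noncomputable def schur (Q : Matrix (Fin (n+1)) (Fin (n+1)) ℝ) : Matrix (Fin n) (Fin n) ℝ :=
  Matrix.of fun i j => Q i.succ j.succ - Q i.succ 0 * Q 0 j.succ / Q 0 0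

lemma expand_quad (M : Matrix (Fin n) (Fin n) ℝ) (y : Fin n → ℝ) :
    y ⬝ᵥ M *ᵥ y = ∑ i, ∑ j, y i * (M i j * y j) := by
  simp [dotProduct, mulVec, Finset.mul_sum]

lemma quad_split (Q : Matrix (Fin (n+1)) (Fin (n+1)) ℝ)
    (hsym : ∀ i j, Q i j = Q j i) (hq : Q 0 0 ≠ 0) (x : Fin (n+1) → ℝ) :
    x ⬝ᵥ Q *ᵥ x = Q 0 0 * (x 0 + (∑ j : Fin n, Q 0 j.succ * x j.succ) / Q 0 0)^2
      + (fun i => x i.succ) ⬝ᵥ (schur Q) *ᵥ (fun i => x i.succ) := by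
  set q := Q 0 0 with hqdef
  set s := ∑ j : Fin n, Q 0 j.succ * x j.succ with hs
  have hL : x ⬝ᵥ Q *ᵥ x = x 0 * (q * x 0) + x 0 * s + s * x 0
      + ∑ i : Fin n, ∑ j : Fin n, x i.succ * (Q i.succ j.succ * x j.succ) := by
    rw [expand_quad]
    rw [Fin.sum_univ_succ]
    simp only [Fin.sum_univ_succ]
    rw [Finset.sum_add_distrib]
    have h1 : ∑ j : Fin n, x 0 * (Q 0 j.succ * x j.succ) = x 0 * s := by
      rw [hs, Finset.mul_sum]
    have h2 : ∑ i : Fin n, x i.succ * (Q i.succ 0 * x 0) = s * x 0 := by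
      rw [hs, Finset.sum_mul]
      apply Finset.sum_congr rfl
      intro i _
      rw [hsym i.succ 0]; ring
    rw [h1, h2]; ring
  have hss : s * s / q = ∑ i : Fin n, ∑ j : Fin n,
      x i.succ * (Q i.succ 0 * Q 0 j.succ / q * x j.succ) := by
    rw [hs, Finset.sum_mul_sum, Finset.sum_div]
    apply Finset.sum_congr rfl
    intro i _
    rw [Finset.sum_div]
    apply Finset.sum_congr rfl
    intro j _
    rw [hsym i.succ 0]; ring
  have hR : (fun i => x i.succ) ⬝ᵥ (schur Q) *ᵥ (fun i => x i.succ)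
      = (∑ i : Fin n, ∑ j : Fin n, x i.succ * (Q i.succ j.succ * x j.succ)) - s * s / q := by
    rw [expand_quad, hss, ← Finset.sum_sub_distrib]
    apply Finset.sum_congr rfl
    intro i _
    rw [← Finset.sum_sub_distrib]
    apply Finset.sum_congr rfl
    intro j _
    simp only [schur, Matrix.of_apply]
    ring
  rw [hL, hR]
  field_simp
  ring

lemma Q00_pos {Q : Matrix (Fin (n+1)) (Fin (n+1)) ℝ} (hQ : Q.PosDef) : 0 < Q 0 0 := by
  have h := hQ.dotProduct_mulVec_pos (x := (Pi.single 0 1 : Fin (n+1) → ℝ)) (by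
    intro h
    have := congrFun h 0
    simp [Pi.single_apply] at this)
  have he : dotProduct (star (Pi.single 0 1 : Fin (n+1) → ℝ)) (Q *ᵥ Pi.single 0 1) = Q 0 0 := by
    simp [dotProduct, mulVec, Pi.single_apply, Finset.sum_ite_eq, mul_comm]
  rwa [he] at h

lemma schur_posDef {Q : Matrix (Fin (n+1)) (Fin (n+1)) ℝ} (hQ : Q.PosDef)
    (hsym : ∀ i j, Q i j = Q j i) : (schur Q).PosDef := by
  have hq : Q 0 0 ≠ 0 := ne_of_gt (Q00_pos hQ)
  refine Matrix.PosDef.of_dotProduct_mulVec_pos ?_ ?_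
  · show (schur Q)ᴴ = schur Q
    ext i j
    simp only [conjTranspose_apply, schur, Matrix.of_apply, star_trivial]
    rw [hsym j.succ i.succ, hsym j.succ 0, hsym 0 i.succ]
    ring
  · intro t ht
    set x : Fin (n+1) → ℝ :=
      Fin.cons (-(∑ j : Fin n, Q 0 j.succ * t j) / Q 0 0) t with hx
    have hxs : ∀ i : Fin n, x i.succ = t i := by
      intro i; rw [hx]; simp
    have hx0 : x 0 = -(∑ j : Fin n, Q 0 j.succ * t j) / Q 0 0 := by rw [hx]; simp
    have hxne : x ≠ 0 := by
      intro h
      apply ht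
      funext i
      have := congrFun h i.succ
      rw [hxs i] at this
      exact this
    have hsplit := quad_split Q hsym hq x
    have hsum : (∑ j : Fin n, Q 0 j.succ * x j.succ) = ∑ j : Fin n, Q 0 j.succ * t j := by
      apply Finset.sum_congr rfl
      intro j _
      rw [hxs j]
    have hzero : x 0 + (∑ j : Fin n, Q 0 j.succ * x j.succ) / Q 0 0 = 0 := by
      rw [hx0, hsum]; field_simp; ring
    have hpos : 0 < x ⬝ᵥ Q *ᵥ x := by
      have := hQ.dotProduct_mulVec_pos hxne
      simpa using this
    rw [hsplit, hzero] at hpos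
    rw [show (0:ℝ)^2 = 0 by norm_num, mul_zero, zero_add] at hpos
    have hfun : (fun i => x i.succ) = t := funext hxs
    rw [hfun] at hpos
    simpa using hpos

lemma det_schur (Q : Matrix (Fin (n+1)) (Fin (n+1)) ℝ) (hq : Q 0 0 ≠ 0) :
    Q.det = Q 0 0 * (schur Q).det := by
  classical
  let e : Fin 1 ⊕ Fin n ≃ Fin (n+1) := finSumFinEquiv.trans (finCongr (Nat.add_comm 1 n))
  have he0 : e (Sum.inl 0) = 0 := by
    apply Fin.ext; simp [e]
  have heS : ∀ j : Fin n, e (Sum.inr j) = j.succ := by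
    intro j; apply Fin.ext; simp [e]
  set B := Q.submatrix e e with hBdef
  have hdet : Q.det = B.det := (Matrix.det_submatrix_equiv_self e Q).symm
  set A := B.toBlocks₁₁
  have hA : ∀ i j : Fin 1, A i j = Q 0 0 := by
    intro i j
    have : i = 0 := Subsingleton.elim i 0
    have hj : j = 0 := Subsingleton.elim j 0
    subst this; subst hj
    simp [A, toBlocks₁₁, B, he0]
  have hAdet : A.det = Q 0 0 := by
    rw [det_fin_one, hA]
  have : Invertible A := A.invertibleOfIsUnitDet (by rw [hAdet]; exact (isUnit_iff_ne_zero.mpr hq))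
  have hBblocks : B = fromBlocks A B.toBlocks₁₂ B.toBlocks₂₁ B.toBlocks₂₂ :=
    (fromBlocks_toBlocks B).symm
  have hinv : (⅟A) 0 0 = (Q 0 0)⁻¹ := by
    have h1 := mul_invOf_self A
    have h3 : A 0 0 * (⅟A) 0 0 = 1 := by
      have h2 : (A * ⅟A) 0 0 = (1 : Matrix (Fin 1) (Fin 1) ℝ) 0 0 := by rw [h1]
      simpa [Matrix.mul_apply, Fin.sum_univ_one, Matrix.one_apply] using h2
    rw [hA] at h3
    field_simp at h3 ⊢
    linarith [h3]
  have hschur : B.toBlocks₂₂ - B.toBlocks₂₁ * ⅟A * B.toBlocks₁₂ = schur Q := by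
    ext i j
    simp only [Matrix.sub_apply, Matrix.mul_apply, Fin.sum_univ_one]
    simp only [toBlocks₂₂, toBlocks₂₁, toBlocks₁₂, B, submatrix_apply, of_apply, he0, heS,
      schur, hinv]
    ring
  rw [hdet]
  conv_lhs => rw [hBblocks]
  rw [det_fromBlocks₁₁, hAdet, hschur]

lemma cast_single (d : ℕ) :
    (fun i => (((Pi.single 0 1 : Fin (d+1) → ℤ) i : ℤ) : ℝ))
      = (Pi.single 0 1 : Fin (d+1) → ℝ) := by
  funext i
  by_cases h : i = 0 <;> simp [Pi.single_apply, h]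

lemma value_single (d : ℕ) (M : Matrix (Fin (d+1)) (Fin (d+1)) ℝ) :
    (fun i => (((Pi.single 0 1 : Fin (d+1) → ℤ) i : ℤ) : ℝ)) ⬝ᵥ M *ᵥ
      (fun i => (((Pi.single 0 1 : Fin (d+1) → ℤ) i : ℤ) : ℝ)) = M 0 0 := by
  rw [cast_single]
  simp [dotProduct, mulVec, Pi.single_apply, Finset.sum_ite_eq, mul_comm]

lemma int_single_ne_zero (d : ℕ) : (Pi.single 0 1 : Fin (d+1) → ℤ) ≠ 0 := by
  intro h
  have := congrFun h 0
  simp [Pi.single_apply] at this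

lemma quad_smul {d : ℕ} (M : Matrix (Fin d) (Fin d) ℝ) (c : ℝ) (x : Fin d → ℝ) :
    (c • x) ⬝ᵥ M *ᵥ (c • x) = c^2 * (x ⬝ᵥ M *ᵥ x) := by
  rw [smul_dotProduct, mulVec_smul, dotProduct_smul]
  simp only [smul_eq_mul]
  ring

set_option maxHeartbeats 2000000 in
lemma hermite_key (n : ℕ) (Q : Matrix (Fin (n+1)) (Fin (n+1)) ℝ) (hQ : Q.PosDef) :
    Md (n+1) Q ≤ ((4:ℝ)/3) ^ ((n : ℝ)/2) * Q.det ^ ((1:ℝ)/((n:ℝ)+1)) := by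
  induction n with
  | zero =>
    have h1 : Md 1 Q ≤ Q 0 0 := by
      have := Md_le hQ (int_single_ne_zero 0)
      rwa [value_single 0 Q] at this
    have h2 : Q.det = Q 0 0 := det_fin_one Q
    have h3 : ((4:ℝ)/3) ^ (((0:ℕ) : ℝ)/2) * Q.det ^ ((1:ℝ)/(((0:ℕ):ℝ)+1)) = Q.det := by
      norm_num
    rw [h3, h2]
    exact h1
  | succ k ih =>
    set m := Md (k+1+1) Q with hm
    have hdetpos : 0 < Q.det := hQ.det_pos
    set C : ℝ := ((4:ℝ)/3) ^ ((k:ℝ)/2) with hC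
    have hCpos : (0:ℝ) < C := Real.rpow_pos_of_pos (by norm_num) _
    by_cases hm0 : m ≤ 0
    · refine le_trans hm0 (le_of_lt ?_)
      exact mul_pos (Real.rpow_pos_of_pos (by norm_num) _) (Real.rpow_pos_of_pos hdetpos _)
    push_neg at hm0
    set e : ℝ := (1:ℝ)/((k:ℝ)+1) with he
    have hkpos : (0:ℝ) < (k:ℝ)+1 := by positivity
    have hk2pos : (0:ℝ) < (k:ℝ)+2 := by positivity
    have claim : ∀ ε : ℝ, 0 < ε → ∀ ε' : ℝ, 0 < ε' →
        m ≤ (m+ε)/4 + C * (Q.det/m) ^ e + ε' := by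
      intro ε hε ε' hε'
      obtain ⟨a, ha, hav⟩ := Md_exists_lt hQ hε
      obtain ⟨U, c, hU, hc, hcol⟩ := exists_unimodular_col a ha
      set V := U.map ((↑) : ℤ → ℝ) with hV
      have hVdet : IsUnit V.det := by
        have h1 : V.det = ((U.det : ℤ) : ℝ) := (RingHom.map_det (Int.castRingHom ℝ) U).symm
        rw [isUnit_iff_ne_zero, h1]
        exact_mod_cast hU.ne_zero
      set Q' := Vᵀ * Q * V with hQ'def
      have hQ' : Q'.PosDef := posDef_conj hQ hVdet
      have hsym' : ∀ i j, Q' i j = Q' j i := by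
        intro i j
        have := hQ'.1.apply j i
        simpa using this
      have hdet' : Q'.det = Q.det := det_conj_cast Q U hU
      have hMd' : Md (k+1+1) Q' = m := Md_transfer Q U hU
      set q := Q' 0 0 with hq
      have hqpos : 0 < q := Q00_pos hQ'
      have hmq : m ≤ q := by
        rw [← hMd']
        have := Md_le hQ' (int_single_ne_zero (k+1))
        rwa [value_single (k+1) Q'] at this
      have hqlt : q < m + ε := by
        have hcast : (fun i => (a i : ℝ))
            = (c:ℝ) • (V *ᵥ (fun i => (((Pi.single 0 1 : Fin (k+1+1) → ℤ) i : ℤ):ℝ))) := by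
          rw [cast_single]
          funext i
          have h1 : (V *ᵥ (Pi.single 0 1 : Fin (k+1+1) → ℝ)) i = V i 0 := by
            simp [mulVec, dotProduct, Pi.single_apply, Finset.sum_ite_eq, mul_comm]
          simp only [Pi.smul_apply, h1, smul_eq_mul]
          rw [hcol i]
          push_cast
          simp [hV]
        have hval : (fun i => (a i : ℝ)) ⬝ᵥ Q *ᵥ (fun i => (a i : ℝ)) = (c:ℝ)^2 * q := by
          rw [hcast, quad_smul, ← quadform_conj, ← hQ'def, value_single]
        have hc2 : (1:ℝ) ≤ (c:ℝ)^2 := by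
          have h0 : (1:ℤ) ≤ |c| := Int.one_le_abs hc
          have h1 : (1:ℤ) ≤ c^2 := by nlinarith [sq_abs c]
          exact_mod_cast h1
        nlinarith [hav, hqpos]
      set R := schur Q' with hRdef
      have hRpos : R.PosDef := schur_posDef hQ' hsym'
      have hdetR : Q'.det = q * R.det := det_schur Q' (ne_of_gt hqpos)
      have hRdet : R.det = Q.det / q := by
        rw [← hdet', hdetR]
        field_simp
      have hRdetpos : 0 < R.det := by rw [hRdet]; positivity
      have hIH := ih R hRpos
      obtain ⟨b, hb, hbv⟩ := Md_exists_lt hRpos hε'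
      set S := ∑ j : Fin (k+1), Q' 0 j.succ * (b j : ℝ) with hS
      set y : ℝ := -S / q with hy
      set x : Fin (k+1+1) → ℤ := Fin.cons (round y) b with hx
      have hxtail : ∀ i : Fin (k+1), x i.succ = b i := by
        intro i; rw [hx]; simp
      have hxne : x ≠ 0 := by
        intro h
        apply hb
        funext i
        have := congrFun h i.succ
        rwa [hxtail i] at this
      have hx0 : x 0 = round y := by rw [hx]; simp
      have hmx : m ≤ ((fun i => ((x i : ℤ) : ℝ)) ⬝ᵥ Q' *ᵥ (fun i => ((x i : ℤ):ℝ))) := by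
        rw [← hMd']
        exact Md_le hQ' hxne
      rw [quad_split Q' hsym' (ne_of_gt hqpos)] at hmx
      have hsum : (∑ j : Fin (k+1), Q' 0 j.succ * ((x j.succ : ℤ):ℝ)) = S := by
        rw [hS]
        apply Finset.sum_congr rfl
        intro j _
        rw [hxtail j]
      have hhead : ((x 0 : ℤ):ℝ) + S / q = (round y : ℝ) - y := by
        rw [hx0, hy]
        field_simp
        ring
      have habs : |y - (round y : ℝ)| ≤ 1/2 := abs_sub_round y
      have hsq : (((x 0 : ℤ):ℝ) + S / q)^2 ≤ 1/4 := by
        rw [hhead]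
        nlinarith [habs, abs_nonneg (y - (round y:ℝ)), sq_abs (y - (round y :ℝ))]
      have htail : (fun i : Fin (k+1) => ((x i.succ : ℤ):ℝ)) = fun i => ((b i : ℤ):ℝ) := by
        funext i; rw [hxtail i]
      rw [hsum, htail] at hmx
      rw [← hRdef] at hmx
      rw [← hq] at hmx
      clear_value R q Q' V
      have hepos : (0:ℝ) ≤ e := by rw [he]; positivity
      have hdiv : (Q.det/q) ^ e ≤ (Q.det/m) ^ e := by
        apply Real.rpow_le_rpow (div_nonneg hdetpos.le hqpos.le) _ hepos
        gcongr
      have hchain : (fun i => ((b i : ℤ):ℝ)) ⬝ᵥ R *ᵥ (fun i => ((b i : ℤ):ℝ))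
          < C * (Q.det/m) ^ e + ε' := by
        calc (fun i => ((b i : ℤ):ℝ)) ⬝ᵥ R *ᵥ (fun i => ((b i : ℤ):ℝ))
            < Md (k+1) R + ε' := hbv
          _ ≤ C * R.det ^ e + ε' := by linarith [hIH]
          _ = C * (Q.det/q) ^ e + ε' := by rw [hRdet]
          _ ≤ C * (Q.det/m) ^ e + ε' := by nlinarith [hdiv, hCpos]
      have hq14 : q * (((x 0 : ℤ):ℝ) + S / q)^2 ≤ q / 4 := by nlinarith [hqpos, hsq]
      have hq4 : q / 4 ≤ (m + ε)/4 := by linarith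
      linarith [hmx, hchain, hq14, hq4]
    have hmain : m ≤ m/4 + C * (Q.det/m) ^ e := by
      apply le_of_forall_pos_le_add
      intro δ hδ
      have h := claim δ hδ (δ/2) (by linarith)
      linarith
    have hKey : (3/4) * m ≤ C * (Q.det/m)^e := by linarith
    have hdivrpow : (Q.det/m)^e = Q.det^e / m^e := Real.div_rpow hdetpos.le hm0.le e
    have hmepos : 0 < m ^ e := Real.rpow_pos_of_pos hm0 e
    have h1 : m ^ ((1:ℝ)+e) ≤ (4/3) * C * Q.det ^ e := by
      have h2 : (3/4)*m*m^e ≤ C * Q.det^e := by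
        calc (3/4)*m*m^e ≤ (C * (Q.det/m)^e) * m^e := by nlinarith [hmepos, hKey]
          _ = C * Q.det^e := by
            rw [hdivrpow]
            field_simp
      have h3 : m ^ ((1:ℝ)+e) = m * m^e := by
        rw [Real.rpow_add hm0, Real.rpow_one]
      rw [h3]
      linarith
    set p : ℝ := ((k:ℝ)+1)/((k:ℝ)+2) with hp
    have hppos : 0 < p := by positivity
    have h1p : ((1:ℝ)+e) * p = 1 := by
      rw [he, hp]
      field_simp
      ring
    have h4 : m = (m ^ ((1:ℝ)+e)) ^ p := by
      rw [← Real.rpow_mul hm0.le, h1p, Real.rpow_one]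
    have h5 : (m ^ ((1:ℝ)+e)) ^ p ≤ ((4/3) * C * Q.det ^ e) ^ p :=
      Real.rpow_le_rpow (Real.rpow_nonneg hm0.le _) h1 hppos.le
    have h6 : (((4:ℝ)/3) * C * Q.det ^ e) ^ p
        = ((4:ℝ)/3) ^ (((k:ℝ)+1)/2) * Q.det ^ ((1:ℝ)/((k:ℝ)+1+1)) := by
      rw [Real.mul_rpow (by positivity) (by positivity),
        Real.mul_rpow (by positivity) (by positivity), hC,
        ← Real.rpow_mul (by norm_num : (0:ℝ) ≤ 4/3),
        ← Real.rpow_add (by norm_num : (0:ℝ) < 4/3),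
        ← Real.rpow_mul hdetpos.le]
      congr 1
      · congr 1
        rw [hp]
        field_simp
        ring
      · congr 1
        rw [he, hp]
        field_simp
        ring
    have hfin : m ≤ ((4:ℝ)/3) ^ (((k:ℝ)+1)/2) * Q.det ^ ((1:ℝ)/((k:ℝ)+1+1)) := by
      calc m = (m ^ ((1:ℝ)+e)) ^ p := h4
        _ ≤ ((4/3) * C * Q.det ^ e) ^ p := h5
        _ = _ := h6
    have hcast1 : ((k+1:ℕ):ℝ) = (k:ℝ)+1 := by push_cast; ring
    rw [hm] at hfin ⊢
    convert hfin using 3 <;> rw [hcast1]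

/-- Hermite's inequality: for a positive definite `d × d` matrix `Q` (`d ≥ 2`),
`M_d(Q) ≤ (4/3)^((d-1)/2) · (det Q)^(1/d)`. -/
theorem hermite_bound (d : ℕ) (hd : 2 ≤ d) (Q : Matrix (Fin d) (Fin d) ℝ)
    (hQ : Q.PosDef) :
    Md d Q ≤ ((4 : ℝ) / 3) ^ (((d : ℝ) - 1) / 2) * Q.det ^ ((1 : ℝ) / d) := by
  obtain ⟨n, rfl⟩ : ∃ n, d = n + 1 := ⟨d - 1, by omega⟩
  have h := hermite_key n Q hQ
  have h1 : ((((n+1:ℕ)):ℝ) - 1)/2 = (n:ℝ)/2 := by push_cast; ring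
  have h2 : ((1:ℝ)/((n+1:ℕ):ℝ)) = (1:ℝ)/((n:ℝ)+1) := by push_cast; ring
  rw [h1, h2]
  exact h
end

section
/- The Jacobian determinant of the Cholesky map φ: L ↦ Lᵀ L from upper triangular matrices with positive diagonal (identified with ℝ^{d(d+1)/2}) to symmetric positive definite matrices (identified with ℝ^{d(d+1)/2} via the upper triangular part) at a point L with diagonal entries l₁₁,...,l_{dd} equals 2^d · Π_{i=1}^d l_{ii}^{d−i+1}. -/
open Matrix

/-- The upper-triangular coordinates `ℝ^{d(d+1)/2}` of matrices. -/
abbrev UpperIdx (d : ℕ) := {p : Fin d × Fin d // p.1 ≤ p.2}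

/-- The upper triangular matrix with given upper coordinates. -/
noncomputable def toUpperMat (d : ℕ) (x : UpperIdx d → ℝ) :
    Matrix (Fin d) (Fin d) ℝ :=
  Matrix.of fun i j => if h : i ≤ j then x ⟨(i, j), h⟩ else 0

/-- The Cholesky map `L ↦ Lᵀ L` read in upper-triangular coordinates on both
sides (a symmetric matrix being recorded by its upper triangular part). -/
noncomputable def cholCoord (d : ℕ) (x : UpperIdx d → ℝ) : UpperIdx d → ℝ :=
  fun p => ((toUpperMat d x)ᵀ * toUpperMat d x) p.1.1 p.1.2

/-- The `(k, i)` entry of `toUpperMat`, as a continuous linear map. -/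
noncomputable def entryCLM (d : ℕ) (k i : Fin d) : (UpperIdx d → ℝ) →L[ℝ] ℝ :=
  if h : k ≤ i then ContinuousLinearMap.proj (⟨(k, i), h⟩ : UpperIdx d) else 0

lemma entryCLM_apply (d : ℕ) (k i : Fin d) (x : UpperIdx d → ℝ) :
    entryCLM d k i x = toUpperMat d x k i := by
  unfold entryCLM toUpperMat
  by_cases h : k ≤ i <;> simp [h]

/-- The derivative of the Cholesky map at `x₀`. -/
noncomputable def cholDeriv (d : ℕ) (x₀ : UpperIdx d → ℝ) :
    (UpperIdx d → ℝ) →L[ℝ] (UpperIdx d → ℝ) :=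
  ContinuousLinearMap.pi fun p => ∑ k : Fin d,
    (entryCLM d k p.1.1 x₀ • entryCLM d k p.1.2 +
      entryCLM d k p.1.2 x₀ • entryCLM d k p.1.1)

lemma cholCoord_eq (d : ℕ) (x : UpperIdx d → ℝ) (p : UpperIdx d) :
    cholCoord d x p = ∑ k : Fin d, entryCLM d k p.1.1 x * entryCLM d k p.1.2 x := by
  simp [cholCoord, Matrix.mul_apply, entryCLM_apply, Matrix.transpose_apply]

lemma hasFDerivAt_cholCoord (d : ℕ) (x₀ : UpperIdx d → ℝ) :
    HasFDerivAt (cholCoord d) (cholDeriv d x₀) x₀ := by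
  rw [hasFDerivAt_pi']
  intro p
  have hfun : (fun x => cholCoord d x p)
      = fun x => ∑ k : Fin d, entryCLM d k p.1.1 x * entryCLM d k p.1.2 x :=
    funext fun x => cholCoord_eq d x p
  rw [hfun]
  unfold cholDeriv
  rw [ContinuousLinearMap.proj_pi]
  exact HasFDerivAt.fun_sum fun k _ =>
    ((entryCLM d k p.1.1).hasFDerivAt.mul (entryCLM d k p.1.2).hasFDerivAt)

lemma entryCLM_single (d : ℕ) (k i : Fin d) (q : UpperIdx d) :
    entryCLM d k i (fun q' => if q' = q then 1 else 0)
      = if k = q.1.1 ∧ i = q.1.2 then 1 else 0 := by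
  unfold entryCLM
  split
  · rename_i h
    simp only [ContinuousLinearMap.proj_apply]
    congr 1
    simp only [eq_iff_iff]
    constructor
    · rintro rfl; exact ⟨rfl, rfl⟩
    · rintro ⟨rfl, rfl⟩
      exact Subtype.ext rfl
  · rename_i h
    rw [if_neg]
    · rfl
    · rintro ⟨rfl, rfl⟩
      exact h q.2

lemma entryCLM_point (d : ℕ) (L : Matrix (Fin d) (Fin d) ℝ)
    (hupper : ∀ i j, j < i → L i j = 0) (k i : Fin d) :
    entryCLM d k i (fun p : UpperIdx d => L p.1.1 p.1.2) = L k i := by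
  unfold entryCLM
  split
  · simp
  · rename_i h
    exact ((hupper k i (lt_of_not_ge h)).symm : (0 : ℝ) = L k i) ▸ rfl

lemma cholDeriv_entry (d : ℕ) (L : Matrix (Fin d) (Fin d) ℝ)
    (hupper : ∀ i j, j < i → L i j = 0) (p q : UpperIdx d) :
    cholDeriv d (fun p : UpperIdx d => L p.1.1 p.1.2)
        (fun q' => if q' = q then 1 else 0) p
      = (if p.1.2 = q.1.2 then L q.1.1 p.1.1 else 0)
        + (if p.1.1 = q.1.2 then L q.1.1 p.1.2 else 0) := by
  unfold cholDeriv
  simp only [ContinuousLinearMap.pi_apply, ContinuousLinearMap.sum_apply,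
    ContinuousLinearMap.add_apply, ContinuousLinearMap.smul_apply,
    entryCLM_point d L hupper, entryCLM_single, smul_eq_mul]
  rw [Finset.sum_add_distrib]
  congr 1
  · rcases eq_or_ne p.1.2 q.1.2 with h | h
    · simp only [h, and_true, if_pos rfl, mul_ite, mul_one, mul_zero]
      rw [Finset.sum_ite_eq' Finset.univ q.1.1 (fun k => L k p.1.1)]
      simp
    · simp [h]
  · rcases eq_or_ne p.1.1 q.1.2 with h | h
    · simp only [h, and_true, if_pos rfl, mul_ite, mul_one, mul_zero]
      rw [Finset.sum_ite_eq' Finset.univ q.1.1 (fun k => L k p.1.2)]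
      simp
    · simp [h]

lemma upperIdx_ord_injective (d : ℕ) :
    Function.Injective (fun p : UpperIdx d => (p.1.1 : ℕ) * d + (p.1.2 : ℕ)) := by
  intro p q h
  simp only at h
  have hd : 0 < d := p.1.1.pos
  have h1 : ∀ r : UpperIdx d, ((r.1.1 : ℕ) * d + (r.1.2 : ℕ)) / d = r.1.1 := by
    intro r
    rw [Nat.mul_comm, Nat.mul_add_div hd, Nat.div_eq_of_lt r.1.2.isLt, Nat.add_zero]
  have h2 : (p.1.1 : ℕ) = q.1.1 := by rw [← h1 p, ← h1 q, h]
  have h3 : (p.1.2 : ℕ) = q.1.2 := by rw [h2] at h; omega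
  exact Subtype.ext (Prod.ext (Fin.ext h2) (Fin.ext h3))

lemma det_of_natTriangular {ι : Type*} [Fintype ι] [DecidableEq ι]
    (M : Matrix ι ι ℝ) (f : ι → ℕ) (hf : Function.Injective f)
    (h : ∀ p q, f p < f q → M p q = 0) :
    M.det = ∏ p, M p p := by
  letI : LinearOrder ι := LinearOrder.lift' f hf
  refine Matrix.det_of_lowerTriangular M ?_
  intro p q hlt
  have hpq : p < q := hlt
  exact h p q (lt_of_le_of_ne (hpq.le : f p ≤ f q) fun hh => hpq.ne (hf hh))

theorem det_cholDeriv (d : ℕ) (L : Matrix (Fin d) (Fin d) ℝ)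
    (hupper : ∀ i j, j < i → L i j = 0) :
    LinearMap.det
        ((cholDeriv d (fun p : UpperIdx d => L p.1.1 p.1.2) :
          (UpperIdx d → ℝ) →L[ℝ] (UpperIdx d → ℝ)) :
          (UpperIdx d → ℝ) →ₗ[ℝ] (UpperIdx d → ℝ))
      = 2 ^ d * ∏ i : Fin d, L i i ^ (d - i.val) := by
  classical
  set x₀ : UpperIdx d → ℝ := fun p => L p.1.1 p.1.2 with hx₀
  rw [← LinearMap.det_toMatrix']
  set M : Matrix (UpperIdx d) (UpperIdx d) ℝ :=
    LinearMap.toMatrix' ((cholDeriv d x₀ : (UpperIdx d → ℝ) →L[ℝ] (UpperIdx d → ℝ)) :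
      (UpperIdx d → ℝ) →ₗ[ℝ] (UpperIdx d → ℝ)) with hMdef
  have hM : ∀ p q : UpperIdx d, M p q
      = (if p.1.2 = q.1.2 then L q.1.1 p.1.1 else 0)
        + (if p.1.1 = q.1.2 then L q.1.1 p.1.2 else 0) := by
    intro p q
    rw [hMdef, LinearMap.toMatrix'_apply]
    have h := cholDeriv_entry d L hupper p q
    rw [← h]
    show (cholDeriv d x₀) (Pi.single q 1) p = (cholDeriv d x₀) (fun q' => if q' = q then 1 else 0) p
    rw [show (Pi.single q 1 : UpperIdx d → ℝ) = fun q' => if q' = q then 1 else 0 from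
      funext fun q' => by simp [Pi.single_apply]]
  have htri : ∀ p q : UpperIdx d,
      (p.1.1 : ℕ) * d + (p.1.2 : ℕ) < (q.1.1 : ℕ) * d + (q.1.2 : ℕ) → M p q = 0 := by
    intro p q hlt'
    rw [hM]
    have h1 : (if p.1.2 = q.1.2 then L q.1.1 p.1.1 else 0) = 0 := by
      split
      · rename_i h
        have hjj : (p.1.2 : ℕ) = (q.1.2 : ℕ) := by rw [h]
        have hmul : (p.1.1 : ℕ) * d < (q.1.1 : ℕ) * d := by omega
        have : (p.1.1 : ℕ) < q.1.1 := Nat.lt_of_mul_lt_mul_right hmul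
        exact hupper q.1.1 p.1.1 this
      · rfl
    have h2 : (if p.1.1 = q.1.2 then L q.1.1 p.1.2 else 0) = 0 := by
      split
      · rename_i h
        exfalso
        have hq : (q.1.1 : ℕ) ≤ q.1.2 := q.2
        have hp : (p.1.1 : ℕ) ≤ p.1.2 := p.2
        have hh : (p.1.1 : ℕ) = (q.1.2 : ℕ) := by rw [h]
        have hmul : (q.1.1 : ℕ) * d ≤ (p.1.1 : ℕ) * d :=
          Nat.mul_le_mul_right d (by omega)
        omega
      · rfl
    rw [h1, h2, add_zero]
  rw [det_of_natTriangular M _ (upperIdx_ord_injective d) htri]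
  have hdiagM : ∀ p : UpperIdx d, M p p
      = if p.1.1 = p.1.2 then 2 * L p.1.1 p.1.1 else L p.1.1 p.1.1 := by
    intro p
    rw [hM]
    rcases eq_or_ne p.1.1 p.1.2 with h | h
    · simp [h]; ring
    · simp [h]
  calc ∏ p : UpperIdx d, M p p
      = ∏ p : UpperIdx d,
          (if (p : Fin d × Fin d).1 = (p : Fin d × Fin d).2
            then 2 * L (p : Fin d × Fin d).1 (p : Fin d × Fin d).1
            else L (p : Fin d × Fin d).1 (p : Fin d × Fin d).1) := by
        exact Finset.prod_congr rfl fun p _ => hdiagM p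
    _ = ∏ p ∈ Finset.univ.filter (fun p : Fin d × Fin d => p.1 ≤ p.2),
          (if p.1 = p.2 then 2 * L p.1 p.1 else L p.1 p.1) := by
        rw [Finset.prod_subtype (p := fun p : Fin d × Fin d => p.1 ≤ p.2)
          (Finset.univ.filter (fun p : Fin d × Fin d => p.1 ≤ p.2))
          (by simp) (fun p : Fin d × Fin d => if p.1 = p.2 then 2 * L p.1 p.1 else L p.1 p.1)]
    _ = ∏ p : Fin d × Fin d,
          (if p.1 ≤ p.2 then (if p.1 = p.2 then 2 * L p.1 p.1 else L p.1 p.1) else 1) := by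
        rw [Finset.prod_filter]
    _ = ∏ i : Fin d, ∏ j : Fin d,
          (if i ≤ j then (if i = j then 2 * L i i else L i i) else 1) := by
        rw [Fintype.prod_prod_type]
    _ = ∏ i : Fin d, ∏ j : Fin d,
          ((if i = j then 2 else 1) * (if i ≤ j then L i i else 1)) := by
        refine Finset.prod_congr rfl fun i _ => Finset.prod_congr rfl fun j _ => ?_
        rcases eq_or_ne i j with h | h
        · simp [h]
        · rcases le_or_gt i j with h' | h'
          · simp [h, h']
          · simp [h, not_le_of_gt h']
    _ = ∏ i : Fin d, (2 * L i i ^ (d - i.val)) := by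
        refine Finset.prod_congr rfl fun i _ => ?_
        rw [Finset.prod_mul_distrib]
        congr 1
        · rw [Finset.prod_ite_eq Finset.univ i (fun _ => (2 : ℝ))]
          simp
        · rw [← Finset.prod_filter]
          rw [Finset.prod_const]
          congr 1
          have : Finset.univ.filter (fun j : Fin d => i ≤ j) = Finset.Ici i := by
            ext j; simp
          rw [this, Fin.card_Ici]
    _ = 2 ^ d * ∏ i : Fin d, L i i ^ (d - i.val) := by
        rw [Finset.prod_mul_distrib, Finset.prod_const, Finset.card_univ, Fintype.card_fin]

/-- The Jacobian determinant of the Cholesky map at an upper triangular matrix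
`L` with positive diagonal entries `l₁₁, …, l_dd` equals
`2^d · ∏ᵢ l_{ii}^{d-i+1}` (with `i` running from `1` to `d`). -/
theorem cholesky_jacobian (d : ℕ) (L : Matrix (Fin d) (Fin d) ℝ)
    (hupper : ∀ i j, j < i → L i j = 0) (hdiag : ∀ i, 0 < L i i) :
    LinearMap.det
        ((fderiv ℝ (cholCoord d) (fun p : UpperIdx d => L p.1.1 p.1.2)) :
          (UpperIdx d → ℝ) →ₗ[ℝ] (UpperIdx d → ℝ))
      = 2 ^ d * ∏ i : Fin d, L i i ^ (d - i.val) := by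
  rw [(hasFDerivAt_cholCoord d (fun p : UpperIdx d => L p.1.1 p.1.2)).fderiv]
  exact det_cholDeriv d L hupper
end

section
/- Let d ≥ 1, γ > 0 and c₀ > γ^d. If T is an upper triangular d×d real matrix with det(γ I_d + Tᵀ T) = c₀, and t denotes the vector of entries of T in ℝ^{d(d+1)/2}, then c₀^{1/d} − γ ≤ ‖t‖₂² ≤ (c₀ − γ^d)/γ^{d−1}. In particular T ≠ 0. -/
open Matrix

private lemma prod_ge_aux {γ : ℝ} (hγ : 0 < γ) {d : ℕ} (f : Fin d → ℝ)
    (hf : ∀ i, 0 ≤ f i) (s : Finset (Fin d)) :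
    γ ^ s.card + γ ^ (s.card - 1) * ∑ i ∈ s, f i ≤ ∏ i ∈ s, (γ + f i) := by
  classical
  induction s using Finset.induction_on with
  | empty => simp
  | @insert a t hat ih =>
    rw [Finset.prod_insert hat, Finset.sum_insert hat, Finset.card_insert_of_notMem hat]
    rcases Finset.eq_empty_or_nonempty t with rfl | hne
    · simp [le_refl]
    · have hcard : 1 ≤ t.card := Finset.card_pos.mpr hne
      have hsum : 0 ≤ ∑ i ∈ t, f i := Finset.sum_nonneg fun i _ => hf i
      have hγc : (0:ℝ) < γ ^ (t.card - 1) := pow_pos hγ _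
      have hγc2 : γ ^ (t.card - 1) * γ = γ ^ t.card := by
        rw [← pow_succ]; congr 1; omega
      have hfa := hf a
      have hprod : 0 < ∏ i ∈ t, (γ + f i) := by
        apply Finset.prod_pos; intro i _; linarith [hf i]
      have key : (γ + f a) * (γ ^ t.card + γ ^ (t.card - 1) * ∑ i ∈ t, f i)
          ≤ (γ + f a) * ∏ i ∈ t, (γ + f i) := by
        apply mul_le_mul_of_nonneg_left ih; linarith
      have expand : γ ^ (t.card + 1) + γ ^ (t.card + 1 - 1) * (f a + ∑ i ∈ t, f i)
          ≤ (γ + f a) * (γ ^ t.card + γ ^ (t.card - 1) * ∑ i ∈ t, f i) := by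
        have h1 : γ ^ (t.card + 1 - 1) = γ ^ t.card := by congr 1
        have h2 : γ ^ (t.card + 1) = γ * γ ^ t.card := by rw [pow_succ]; ring
        have hpos : 0 ≤ γ ^ t.card := le_of_lt (pow_pos hγ _)
        nlinarith [mul_nonneg (mul_nonneg hfa (le_of_lt hγc)) hsum]
      linarith

/-- Norm bounds on the manifold `det(γ I + Tᵀ T) = c₀`: if `γ > 0`,
`c₀ > γ^d` and `T` is upper triangular with `det(γ I_d + Tᵀ T) = c₀`, then the
vector `t ∈ ℝ^{d(d+1)/2}` of entries of `T` satisfies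
`c₀^{1/d} − γ ≤ ‖t‖₂² ≤ (c₀ − γ^d)/γ^{d−1}`; in particular `T ≠ 0`. -/
theorem entries_norm_bounds (d : ℕ) (hd : 1 ≤ d) (γ c₀ : ℝ) (hγ : 0 < γ)
    (hc : γ ^ d < c₀) (T : Matrix (Fin d) (Fin d) ℝ)
    (hupper : ∀ i j, j < i → T i j = 0)
    (hdet : (γ • (1 : Matrix (Fin d) (Fin d) ℝ) + Tᵀ * T).det = c₀) :
    c₀ ^ ((1 : ℝ) / d) - γ ≤
        (∑ p : {p : Fin d × Fin d // p.1 ≤ p.2}, (T p.1.1 p.1.2) ^ 2) ∧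
      (∑ p : {p : Fin d × Fin d // p.1 ≤ p.2}, (T p.1.1 p.1.2) ^ 2)
        ≤ (c₀ - γ ^ d) / γ ^ (d - 1) ∧
      T ≠ 0 := by
  classical
  set M : Matrix (Fin d) (Fin d) ℝ := Tᵀ * T with hMdef
  have hMpsd : M.PosSemidef := by
    have := Matrix.posSemidef_conjTranspose_mul_self T
    simpa [Matrix.conjTranspose_eq_transpose_of_trivial] using this
  have hM : M.IsHermitian := hMpsd.isHermitian
  set μ : Fin d → ℝ := hM.eigenvalues with hμdef
  have hμ0 : ∀ i, 0 ≤ μ i := hMpsd.eigenvalues_nonneg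
  -- S : the subtype sum equals the full sum of squares, equals trace M
  set S : ℝ := ∑ p : {p : Fin d × Fin d // p.1 ≤ p.2}, (T p.1.1 p.1.2) ^ 2 with hSdef
  have hS_full : S = ∑ p : Fin d × Fin d, (T p.1 p.2) ^ 2 := by
    rw [hSdef, ← Finset.sum_subtype (Finset.univ.filter (fun p : Fin d × Fin d => p.1 ≤ p.2))
      (by simp) (fun p => (T p.1 p.2) ^ 2)]
    apply Finset.sum_subset (Finset.filter_subset _ _)
    intro p _ hp
    simp only [Finset.mem_filter, Finset.mem_univ, true_and, not_le] at hp
    rw [hupper _ _ hp]; ring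
  have htrace : M.trace = S := by
    rw [hS_full, Matrix.trace, Fintype.sum_prod_type]
    simp only [Matrix.diag_apply, hMdef, Matrix.mul_apply, Matrix.transpose_apply]
    rw [Finset.sum_comm]
    congr 1; ext j; congr 1; ext i; ring
  -- spectral theorem : det (γ•1 + M) = ∏ (γ + μ i), trace M = ∑ μ i
  set U : Matrix (Fin d) (Fin d) ℝ := (hM.eigenvectorUnitary : Matrix (Fin d) (Fin d) ℝ)
    with hUdef
  have hU1 : U * star U = 1 := (Matrix.mem_unitaryGroup_iff).mp hM.eigenvectorUnitary.2
  have hU1' : star U * U = 1 := (Matrix.mem_unitaryGroup_iff').mp hM.eigenvectorUnitary.2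
  have hspec : M = U * Matrix.diagonal μ * star U := by
    have := hM.spectral_theorem
    simpa using this
  have hdecomp : γ • (1 : Matrix (Fin d) (Fin d) ℝ) + M
      = U * Matrix.diagonal (fun i => γ + μ i) * star U := by
    have h1 : (Matrix.diagonal (fun i => γ + μ i) : Matrix (Fin d) (Fin d) ℝ)
        = γ • 1 + Matrix.diagonal μ := by
      ext i j
      by_cases h : i = j <;>
        simp [Matrix.diagonal_apply, Matrix.one_apply, h]
    rw [h1, Matrix.mul_add, Matrix.add_mul]
    rw [hspec]
    congr 1
    rw [Matrix.mul_smul, mul_one, Matrix.smul_mul, hU1]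
  have hdetprod : c₀ = ∏ i, (γ + μ i) := by
    rw [← hdet, hdecomp, Matrix.det_mul, Matrix.det_mul, mul_comm, ← mul_assoc,
      ← Matrix.det_mul, hU1', Matrix.det_one, one_mul, Matrix.det_diagonal]
  have htracesum : M.trace = ∑ i, μ i := by
    conv_lhs => rw [hspec]
    rw [Matrix.trace_mul_cycle, hU1', one_mul, Matrix.trace_diagonal]
  have hsumS : ∑ i, μ i = S := by rw [← htracesum, htrace]
  have hSnonneg : 0 ≤ S := by
    rw [← hsumS]; exact Finset.sum_nonneg fun i _ => hμ0 i
  -- lower bound: c₀ ≥ γ^d + γ^(d-1) * S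
  have hlow : γ ^ d + γ ^ (d - 1) * S ≤ c₀ := by
    rw [hdetprod]
    have := prod_ge_aux hγ μ hμ0 Finset.univ
    simpa [Finset.card_univ, hsumS] using this
  -- upper bound: c₀ ≤ (γ + S)^d
  have hup : c₀ ≤ (γ + S) ^ d := by
    rw [hdetprod]
    calc ∏ i, (γ + μ i) ≤ ∏ _i : Fin d, (γ + S) := by
          apply Finset.prod_le_prod
          · intro i _; linarith [hμ0 i]
          · intro i _
            have : μ i ≤ S := by
              rw [← hsumS]
              exact Finset.single_le_sum (fun j _ => hμ0 j) (Finset.mem_univ i)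
            linarith
      _ = (γ + S) ^ d := by rw [Finset.prod_const, Finset.card_univ, Fintype.card_fin]
  have hγd : (0:ℝ) < γ ^ (d-1) := pow_pos hγ _
  refine ⟨?_, ?_, ?_⟩
  · -- c₀ ^ (1/d) - γ ≤ S
    have hc0pos : (0:ℝ) < c₀ := lt_trans (pow_pos hγ d) hc
    have hγS : (0:ℝ) < γ + S := by linarith
    have hd0 : (d:ℝ) ≠ 0 := Nat.cast_ne_zero.mpr (by omega)
    have : c₀ ^ ((1:ℝ)/d) ≤ ((γ + S) ^ d) ^ ((1:ℝ)/d) :=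
      Real.rpow_le_rpow (le_of_lt hc0pos) hup (by positivity)
    have h2 : ((γ + S) ^ d) ^ ((1:ℝ)/d) = γ + S := by
      rw [← Real.rpow_natCast (γ + S) d, ← Real.rpow_mul (le_of_lt hγS)]
      rw [mul_one_div, div_self hd0, Real.rpow_one]
    linarith [h2 ▸ this]
  · rw [div_eq_inv_mul, ← sub_nonneg]
    have : γ ^ (d-1) * S ≤ c₀ - γ ^ d := by linarith
    calc (0:ℝ) ≤ (γ ^ (d-1))⁻¹ * (c₀ - γ ^ d) - S := by
          rw [sub_nonneg, ← div_eq_inv_mul, le_div_iff₀ hγd, mul_comm]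
          linarith
      _ = (γ ^ (d-1))⁻¹ * (c₀ - γ ^ d) - S := rfl
  · intro hT0
    have hc0 : ((γ:ℝ) • (1 : Matrix (Fin d) (Fin d) ℝ)).det = c₀ := by
      rw [← hdet]
      congr 1
      rw [hMdef, hT0]
      simp
    rw [Matrix.det_smul, Matrix.det_one, mul_one, Fintype.card_fin] at hc0
    linarith
end
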